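/- Time-domain necessity of the system level constraints (output feedback): let A ∈ ℝ^{n_x×n_x}, B ∈ ℝ^{n_x×n_u}, C ∈ ℝ^{n_y×n_x}, and let K : ℕ → ℝ^{n_u×n_y} be any causal convolution feedback kernel. Define matrix sequences Φ_xx : ℕ → ℝ^{n_x×n_x}, Φ_ux : ℕ → ℝ^{n_u×n_x}, Φ_xy : ℕ → ℝ^{n_x×n_y}, Φ_uy : ℕ → ℝ^{n_u×n_y} by: Φ_xx(0) = 0, Φ_xx(1) = I, Φ_xy(0) = 0, Φ_ux(0) = 0, Φ_uy(0) = K(0); Φ_ux(n) = Σ_{m=0}^{n−1} K(m)·C·Φ_xx(n−m) for n ≥ 1; Φ_xx(n+1) = A·Φ_xx(n) + B·Φ_ux(n) for n ≥ 1; Φ_uy(n) = K(n) + Σ_{m=0}^{n−1} K(m)·C·Φ_xy(n−m) for n ≥ 1; and Φ_xy(n+1) = A·Φ_xy(n) + B·Φ_uy(n) for n ≥ 0. Then: (i) for all disturbance sequences δx : ℕ → ℝ^{n_x}, δy : ℕ → ℝ^{n_y}, the closed-loop trajectories defined by x₀ = 0, y_t = C x_t + δy_t, u_t = Σ_{m=0}^{t}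 K(m) y_{t−m}, x_{t+1} = A x_t + δx_t + B u_t satisfy x_t = Σ_{n=1}^{t} Φ_xx(n) δx_{t−n} + Σ_{n=1}^{t} Φ_xy(n) δy_{t−n} and u_t = Σ_{n=1}^{t} Φ_ux(n) δx_{t−n} + Σ_{n=0}^{t} Φ_uy(n) δy_{t−n} for every t; and (ii) these kernels also satisfy the dual recursions Φ_xx(n+1) = Φ_xx(n)·A + Φ_xy(n)·C for all n ≥ 1 and Φ_ux(n+1) = Φ_ux(n)·A + Φ_uy(n)·C for all n ≥ 0. -/

import Mathlib

open scoped Matrix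

private lemma mulVec_sum' {m n : Type*} [Fintype n] (M : Matrix m n ℝ) {ι : Type*}
    (s : Finset ι) (v : ι → n → ℝ) :
    M.mulVec (∑ i ∈ s, v i) = ∑ i ∈ s, M.mulVec (v i) := by
  classical
  induction s using Finset.induction with
  | empty => simp
  | insert _ _ h ih => rw [Finset.sum_insert h, Finset.sum_insert h, Matrix.mulVec_add, ih]

private lemma sum_mulVec' {m n : Type*} [Fintype n] {ι : Type*}
    (s : Finset ι) (M : ι → Matrix m n ℝ) (v : n → ℝ) :
    (∑ i ∈ s, M i).mulVec v = ∑ i ∈ s, (M i).mulVec v := by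
  classical
  induction s using Finset.induction with
  | empty => simp
  | insert _ _ h ih => rw [Finset.sum_insert h, Finset.sum_insert h, Matrix.add_mulVec, ih]

private lemma icc_sum {α : Type*} [AddCommMonoid α] (T : ℕ) (g : ℕ → α) :
    ∑ n ∈ Finset.Icc 1 T, g n = ∑ i ∈ Finset.range T, g (i + 1) := by
  induction T with
  | zero => simp
  | succ T ih => rw [Finset.sum_Icc_succ_top (by omega), ih, Finset.sum_range_succ]

private lemma range_split {α : Type*} [AddCommMonoid α] (T : ℕ) (g : ℕ → α) :
    ∑ n ∈ Finset.range (T + 1), g n = g 0 + ∑ n ∈ Finset.Icc 1 T, g n := by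
  have h : Finset.range (T + 1) = insert 0 (Finset.Icc 1 T) := by
    ext a; simp only [Finset.mem_range, Finset.mem_insert, Finset.mem_Icc]; omega
  rw [h, Finset.sum_insert (by simp)]

private lemma swap_sum {α : Type*} [AddCommMonoid α] (T : ℕ) (f : ℕ → ℕ → α) :
    ∑ m ∈ Finset.range (T + 1), ∑ n ∈ Finset.Icc 1 (T - m), f m n
      = ∑ j ∈ Finset.Icc 1 T, ∑ m ∈ Finset.range j, f m (j - m) := by
  rw [Finset.sum_sigma', Finset.sum_sigma']
  refine Finset.sum_nbij'
    (fun p : (_ : ℕ) × ℕ => (⟨p.1 + p.2, p.1⟩ : (_ : ℕ) × ℕ))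
    (fun p : (_ : ℕ) × ℕ => (⟨p.2, p.1 - p.2⟩ : (_ : ℕ) × ℕ)) ?_ ?_ ?_ ?_ ?_
  · rintro ⟨a, b⟩ h
    simp only [Finset.mem_sigma, Finset.mem_range, Finset.mem_Icc] at h ⊢
    omega
  · rintro ⟨a, b⟩ h
    simp only [Finset.mem_sigma, Finset.mem_range, Finset.mem_Icc] at h ⊢
    omega
  · rintro ⟨a, b⟩ h
    simp only [Finset.mem_sigma, Finset.mem_range, Finset.mem_Icc] at h
    have e : a + b - a = b := by omega
    simp [e]
  · rintro ⟨a, b⟩ h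
    simp only [Finset.mem_sigma, Finset.mem_range, Finset.mem_Icc] at h
    have e : b + (a - b) = a := by omega
    simp [e]
  · rintro ⟨a, b⟩ h
    simp only [Nat.add_sub_cancel_left]

/-- Time-domain necessity of the system level constraints (output
feedback): for any causal convolution feedback kernel `K`, the closed-loop kernels
`(Φxx, Φux, Φxy, Φuy)` defined from `K` (i) describe exactly the closed-loop maps from
the disturbances to the state and input, and (ii) satisfy the dual system level
recursions. -/
theorem stmt12 {nx nu ny : ℕ}
    (A : Matrix (Fin nx) (Fin nx) ℝ) (B : Matrix (Fin nx) (Fin nu) ℝ)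
    (C : Matrix (Fin ny) (Fin nx) ℝ)
    (K : ℕ → Matrix (Fin nu) (Fin ny) ℝ)
    (Φxx : ℕ → Matrix (Fin nx) (Fin nx) ℝ) (Φux : ℕ → Matrix (Fin nu) (Fin nx) ℝ)
    (Φxy : ℕ → Matrix (Fin nx) (Fin ny) ℝ) (Φuy : ℕ → Matrix (Fin nu) (Fin ny) ℝ)
    (hxx0 : Φxx 0 = 0) (hxx1 : Φxx 1 = 1) (hxy0 : Φxy 0 = 0) (hux0 : Φux 0 = 0)
    (huy0 : Φuy 0 = K 0)
    (hux : ∀ n, 1 ≤ n → Φux n = ∑ m ∈ Finset.range n, K m * C * Φxx (n - m))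
    (hxx : ∀ n, 1 ≤ n → Φxx (n + 1) = A * Φxx n + B * Φux n)
    (huy : ∀ n, 1 ≤ n → Φuy n = K n + ∑ m ∈ Finset.range n, K m * C * Φxy (n - m))
    (hxy : ∀ n, Φxy (n + 1) = A * Φxy n + B * Φuy n) :
    (∀ (δx : ℕ → Fin nx → ℝ) (δy : ℕ → Fin ny → ℝ)
        (x : ℕ → Fin nx → ℝ) (y : ℕ → Fin ny → ℝ) (u : ℕ → Fin nu → ℝ),
      x 0 = 0 →
      (∀ t, y t = C.mulVec (x t) + δy t) →
      (∀ t, u t = ∑ m ∈ Finset.range (t + 1), (K m).mulVec (y (t - m))) →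
      (∀ t, x (t + 1) = A.mulVec (x t) + δx t + B.mulVec (u t)) →
      ∀ t, x t = (∑ n ∈ Finset.Icc 1 t, (Φxx n).mulVec (δx (t - n))) +
            ∑ n ∈ Finset.Icc 1 t, (Φxy n).mulVec (δy (t - n)) ∧
          u t = (∑ n ∈ Finset.Icc 1 t, (Φux n).mulVec (δx (t - n))) +
            ∑ n ∈ Finset.range (t + 1), (Φuy n).mulVec (δy (t - n))) ∧
    (∀ n, 1 ≤ n → Φxx (n + 1) = Φxx n * A + Φxy n * C) ∧
    (∀ n, Φux (n + 1) = Φux n * A + Φuy n * C) := by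
  -- Part (ii): dual recursions, by strong induction.
  have dual : ∀ n : ℕ, (1 ≤ n → Φxx (n + 1) = Φxx n * A + Φxy n * C) ∧
      (Φux (n + 1) = Φux n * A + Φuy n * C) := by
    intro n
    induction n using Nat.strong_induction_on with
    | _ n ih =>
      have hA : 1 ≤ n → Φxx (n + 1) = Φxx n * A + Φxy n * C := by
        intro hn
        match n, hn with
        | 1, _ =>
          have h1 : Φux 1 = K 0 * C := by
            rw [hux 1 le_rfl]; simp [hxx1]
          have h2 : Φxy 1 = B * K 0 := by
            rw [show (1 : ℕ) = 0 + 1 from rfl, hxy 0, hxy0, huy0]; simp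
          rw [show (1 : ℕ) + 1 = 1 + 1 from rfl, hxx 1 le_rfl, h1, h2, hxx1]
          rw [mul_one, one_mul, Matrix.mul_assoc]
        | (k+2), _ =>
          have h1 := (ih (k+1) (by omega)).1 (by omega)
          have h2 := (ih (k+1) (by omega)).2
          calc Φxx (k + 2 + 1)
              = A * Φxx (k + 2) + B * Φux (k + 2) := hxx (k + 2) (by omega)
            _ = A * (Φxx (k+1) * A + Φxy (k+1) * C)
                + B * (Φux (k+1) * A + Φuy (k+1) * C) := by rw [← h1, ← h2]
            _ = (A * Φxx (k+1) + B * Φux (k+1)) * A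
                + (A * Φxy (k+1) + B * Φuy (k+1)) * C := by
                  simp only [Matrix.mul_add, Matrix.add_mul, Matrix.mul_assoc]
                  abel
            _ = Φxx (k + 2) * A + Φxy (k + 2) * C := by
                  rw [← hxx (k+1) (by omega), ← hxy (k+1)]
      refine ⟨hA, ?_⟩
      rcases Nat.eq_zero_or_pos n with h0 | hn
      · subst h0
        rw [hux 1 le_rfl, hux0, huy0]
        simp [hxx1]
      · have hAall : ∀ k, 1 ≤ k → k ≤ n → Φxx (k + 1) = Φxx k * A + Φxy k * C := by
          intro k hk1 hkn
          rcases eq_or_lt_of_le hkn with rfl | hlt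
          · exact hA hk1
          · exact (ih k hlt).1 hk1
        rw [hux (n+1) (by omega), Finset.sum_range_succ]
        have hco : ∀ m ∈ Finset.range n, K m * C * Φxx (n + 1 - m)
            = K m * C * Φxx (n - m) * A + K m * C * Φxy (n - m) * C := by
          intro m hm
          rw [Finset.mem_range] at hm
          rw [show n + 1 - m = (n - m) + 1 from by omega,
            hAall (n - m) (by omega) (by omega), Matrix.mul_add]
          simp only [Matrix.mul_assoc]
        rw [Finset.sum_congr rfl hco, Finset.sum_add_distrib,
          show n + 1 - n = 1 from by omega, hxx1, Matrix.mul_one,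
          huy n hn, hux n hn, ← Matrix.sum_mul, ← Matrix.sum_mul, Matrix.add_mul]
        abel
  refine ⟨?_, fun n hn => (dual n).1 hn, fun n => (dual n).2⟩
  intro δx δy x y u hx0 hy hu hxrec
  -- the input formula, given the state formula up to time t
  have hufof : ∀ t : ℕ,
      (∀ s, s ≤ t → x s = (∑ n ∈ Finset.Icc 1 s, (Φxx n).mulVec (δx (s - n))) +
        ∑ n ∈ Finset.Icc 1 s, (Φxy n).mulVec (δy (s - n))) →
      u t = (∑ n ∈ Finset.Icc 1 t, (Φux n).mulVec (δx (t - n))) +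
        ∑ n ∈ Finset.range (t + 1), (Φuy n).mulVec (δy (t - n)) := by
    intro t hX
    have step : ∀ m ∈ Finset.range (t + 1),
        (K m).mulVec (y (t - m)) =
          (∑ n ∈ Finset.Icc 1 (t - m), (K m * C * Φxx n).mulVec (δx (t - m - n)))
          + ((∑ n ∈ Finset.Icc 1 (t - m), (K m * C * Φxy n).mulVec (δy (t - m - n)))
          + (K m).mulVec (δy (t - m))) := by
      intro m hm
      rw [hy (t - m), hX (t - m) (by omega), Matrix.mulVec_add, Matrix.mulVec_add,
        Matrix.mulVec_add, mulVec_sum', mulVec_sum', mulVec_sum', mulVec_sum']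
      simp only [Matrix.mulVec_mulVec, Matrix.mul_assoc]
      abel
    rw [hu t, Finset.sum_congr rfl step]
    simp only [Finset.sum_add_distrib]
    rw [swap_sum t (fun m n => (K m * C * Φxx n).mulVec (δx (t - m - n))),
      swap_sum t (fun m n => (K m * C * Φxy n).mulVec (δy (t - m - n)))]
    have e1 : ∀ j ∈ Finset.Icc 1 t,
        (∑ m ∈ Finset.range j, (K m * C * Φxx (j - m)).mulVec (δx (t - m - (j - m))))
          = (Φux j).mulVec (δx (t - j)) := by
      intro j hj
      rw [Finset.mem_Icc] at hj
      have h1 : ∀ m ∈ Finset.range j,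
          (K m * C * Φxx (j - m)).mulVec (δx (t - m - (j - m)))
            = (K m * C * Φxx (j - m)).mulVec (δx (t - j)) := by
        intro m hm; rw [Finset.mem_range] at hm
        rw [show t - m - (j - m) = t - j from by omega]
      rw [Finset.sum_congr rfl h1, ← sum_mulVec', ← hux j hj.1]
    have e2 : ∀ j ∈ Finset.Icc 1 t,
        (∑ m ∈ Finset.range j, (K m * C * Φxy (j - m)).mulVec (δy (t - m - (j - m))))
          = (Φuy j).mulVec (δy (t - j)) - (K j).mulVec (δy (t - j)) := by
      intro j hj
      rw [Finset.mem_Icc] at hj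
      have h1 : ∀ m ∈ Finset.range j,
          (K m * C * Φxy (j - m)).mulVec (δy (t - m - (j - m)))
            = (K m * C * Φxy (j - m)).mulVec (δy (t - j)) := by
        intro m hm; rw [Finset.mem_range] at hm
        rw [show t - m - (j - m) = t - j from by omega]
      rw [Finset.sum_congr rfl h1, ← sum_mulVec', huy j hj.1, Matrix.add_mulVec]
      abel
    rw [Finset.sum_congr rfl e1, Finset.sum_congr rfl e2,
      range_split t (fun n => (K n).mulVec (δy (t - n))),
      range_split t (fun n => (Φuy n).mulVec (δy (t - n))), huy0]
    simp only [Finset.sum_sub_distrib]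
    abel
  -- the state formula, by strong induction
  have hxf : ∀ t : ℕ, x t = (∑ n ∈ Finset.Icc 1 t, (Φxx n).mulVec (δx (t - n))) +
      ∑ n ∈ Finset.Icc 1 t, (Φxy n).mulVec (δy (t - n)) := by
    intro t
    induction t using Nat.strong_induction_on with
    | _ t ih =>
      match t with
      | 0 => simpa using hx0
      | (s + 1) =>
        have hus := hufof s (fun r hr => ih r (by omega))
        rw [hxrec s, ih s (by omega), hus, Matrix.mulVec_add, Matrix.mulVec_add,
          mulVec_sum', mulVec_sum', mulVec_sum', mulVec_sum']
        simp only [Matrix.mulVec_mulVec]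
        -- rewrite the RHS sums
        rw [icc_sum (s+1) (fun n => (Φxx n).mulVec (δx (s + 1 - n))),
          icc_sum (s+1) (fun n => (Φxy n).mulVec (δy (s + 1 - n))),
          icc_sum s (fun n => (A * Φxx n).mulVec (δx (s - n))),
          icc_sum s (fun n => (A * Φxy n).mulVec (δy (s - n))),
          icc_sum s (fun n => (B * Φux n).mulVec (δx (s - n)))]
        simp only [Nat.add_sub_add_right]
        rw [Finset.sum_range_succ' (fun i => (Φxx (i+1)).mulVec (δx (s - i))) s]
        have exx : ∀ i ∈ Finset.range s,
            (Φxx (i + 1 + 1)).mulVec (δx (s - (i + 1)))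
              = (A * Φxx (i+1)).mulVec (δx (s - (i+1)))
                + (B * Φux (i+1)).mulVec (δx (s - (i+1))) := by
          intro i _
          rw [hxx (i+1) (by omega), Matrix.add_mulVec]
        have exy : ∀ i ∈ Finset.range (s + 1),
            (Φxy (i + 1)).mulVec (δy (s - i))
              = (A * Φxy i).mulVec (δy (s - i))
                + (B * Φuy i).mulVec (δy (s - i)) := by
          intro i _
          rw [hxy i, Matrix.add_mulVec]
        rw [Finset.sum_congr rfl exx, Finset.sum_congr rfl exy,
          Finset.sum_add_distrib, Finset.sum_add_distrib,
          Finset.sum_range_succ' (fun i => (A * Φxy i).mulVec (δy (s - i))) s]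
        simp only [Nat.sub_zero, hxx1, Matrix.one_mulVec, hxy0, Matrix.mul_zero,
          Matrix.zero_mulVec]
        abel
  exact fun t => ⟨hxf t, hufof t (fun s _ => hxf s)⟩
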